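/- Let B ∈ ℝ^(d×d) be a random matrix which is almost surely invertible, and let v be uniformly distributed on [0,1]^d and independent of B. For any f ∈ L^1(ℝ^d), the series Q_B^v(f) = |det B|^(−1) ∑_{m∈ℤ^d} f(B^(−⊤)(m+v)) converges absolutely almost surely and its expectation equals ∫_{ℝ^d} f(y) dy. -/

import Mathlib

open Matrix MeasureTheory ProbabilityTheory

/-- Matrices carry the product measurable structure (entrywise). -/
instance matrixMeasurableSpace (d : ℕ) : MeasurableSpace (Matrix (Fin d) (Fin d) ℝ) :=
  MeasurableSpace.pi

variable {d : ℕ}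

noncomputable def cVec (m : Fin d → ℤ) : Fin d → ℝ := fun i => (m i : ℝ)

def Sm (m : Fin d → ℤ) : Set (Fin d → ℝ) :=
  Set.univ.pi fun i => Set.Ico (m i : ℝ) (m i + 1)

lemma Sm_meas (m : Fin d → ℤ) : MeasurableSet (Sm m) :=
  MeasurableSet.univ_pi fun _ => measurableSet_Ico

lemma mem_Sm_iff (m : Fin d → ℤ) (x : Fin d → ℝ) :
    x ∈ Sm m ↔ ∀ i, ⌊x i⌋ = m i := by
  simp only [Sm, Set.mem_pi, Set.mem_univ, forall_true_left, Set.mem_Ico]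
  constructor
  · intro h i
    exact Int.floor_eq_iff.2 ⟨(h i).1, by exact_mod_cast (h i).2⟩
  · intro h i
    rw [← h i]
    exact ⟨Int.floor_le _, by exact_mod_cast Int.lt_floor_add_one (x i)⟩

lemma Sm_disjoint : Pairwise (Function.onFun Disjoint (Sm (d := d))) := by
  intro m m' hne
  rw [Function.onFun, Set.disjoint_left]
  intro x hx hx'
  exact hne (funext fun i => ((mem_Sm_iff m x).1 hx i).symm.trans ((mem_Sm_iff m' x).1 hx' i))

lemma Sm_iUnion : (⋃ m : Fin d → ℤ, Sm m) = Set.univ := by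
  ext x
  simp only [Set.mem_iUnion, Set.mem_univ, iff_true]
  exact ⟨fun i => ⌊x i⌋, (mem_Sm_iff _ x).2 fun i => rfl⟩

lemma add_mem_Sm (m : Fin d → ℤ) (x : Fin d → ℝ) :
    cVec m + x ∈ Sm m ↔ x ∈ Sm 0 := by
  simp only [Sm, Set.mem_pi, Set.mem_univ, forall_true_left, Set.mem_Ico, Pi.add_apply, cVec, Pi.zero_apply, Int.cast_zero]
  push_cast
  constructor <;> intro h i <;> have := h i <;> constructor <;> linarith [this.1, this.2]

lemma lintegral_translate (h : (Fin d → ℝ) → ENNReal) (hh : Measurable h) (m : Fin d → ℤ) :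
    ∫⁻ x in Sm 0, h (cVec m + x) = ∫⁻ u in Sm m, h u := by
  rw [← lintegral_indicator (Sm_meas 0), ← lintegral_indicator (Sm_meas m)]
  have : ∀ x, (Sm 0).indicator (fun x => h (cVec m + x)) x
      = (Sm m).indicator h (cVec m + x) := by
    intro x
    by_cases hx : x ∈ Sm 0
    · rw [Set.indicator_of_mem hx, Set.indicator_of_mem ((add_mem_Sm m x).2 hx)]
    · rw [Set.indicator_of_notMem hx,
        Set.indicator_of_notMem (fun hc => hx ((add_mem_Sm m x).1 hc))]
  simp_rw [this]
  exact lintegral_add_left_eq_self ((Sm m).indicator h) (cVec m)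

lemma integral_translate (g : (Fin d → ℝ) → ℝ) (m : Fin d → ℤ) :
    ∫ x in Sm 0, g (cVec m + x) = ∫ u in Sm m, g u := by
  rw [← integral_indicator (Sm_meas 0), ← integral_indicator (Sm_meas m)]
  have : ∀ x, (Sm 0).indicator (fun x => g (cVec m + x)) x
      = (Sm m).indicator g (cVec m + x) := by
    intro x
    by_cases hx : x ∈ Sm 0
    · rw [Set.indicator_of_mem hx, Set.indicator_of_mem ((add_mem_Sm m x).2 hx)]
    · rw [Set.indicator_of_notMem hx,
        Set.indicator_of_notMem (fun hc => hx ((add_mem_Sm m x).1 hc))]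
  simp_rw [this]
  exact integral_add_left_eq_self ((Sm m).indicator g) (cVec m)

lemma lintegral_cube_tsum (h : (Fin d → ℝ) → ENNReal) (hh : Measurable h) :
    ∫⁻ x in Sm 0, ∑' m : Fin d → ℤ, h (cVec m + x) = ∫⁻ u, h u := by
  have hmeas : ∀ m : Fin d → ℤ, AEMeasurable (fun x => h (cVec m + x)) (volume.restrict (Sm 0)) :=
    fun m => (hh.comp (measurable_const_add (cVec m))).aemeasurable
  rw [lintegral_tsum hmeas]
  simp_rw [lintegral_translate h hh]
  rw [← lintegral_iUnion Sm_meas Sm_disjoint h, Sm_iUnion, Measure.restrict_univ]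

section Matrix
variable {b : Matrix (Fin d) (Fin d) ℝ}

lemma detM (hb : b.det ≠ 0) : ((b⁻¹)ᵀ).det = (b.det)⁻¹ := by
  rw [det_transpose, det_nonsing_inv, Ring.inverse_eq_inv]

lemma detM_ne (hb : b.det ≠ 0) : ((b⁻¹)ᵀ).det ≠ 0 := by
  rw [detM hb]; exact inv_ne_zero hb

lemma measurable_mulVecM : Measurable fun u : Fin d → ℝ => (b⁻¹)ᵀ.mulVec u := by
  have : Continuous (toLin' (b⁻¹)ᵀ) := LinearMap.continuous_on_pi _
  convert this.measurable using 1
  ext u; simp [Matrix.toLin'_apply]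

lemma map_mulVecM (hb : b.det ≠ 0) :
    Measure.map (fun u : Fin d → ℝ => (b⁻¹)ᵀ.mulVec u) volume
      = ENNReal.ofReal |b.det| • volume := by
  have h1 : Measure.map (toLin' (b⁻¹)ᵀ) volume
      = ENNReal.ofReal |((b⁻¹)ᵀ.det)⁻¹| • volume :=
    Real.map_matrix_volume_pi_eq_smul_volume_pi (detM_ne hb)
  have h2 : |((b⁻¹)ᵀ.det)⁻¹| = |b.det| := by rw [detM hb, inv_inv]
  have h3 : (fun u : Fin d → ℝ => (b⁻¹)ᵀ.mulVec u) = ⇑(toLin' (b⁻¹)ᵀ) := by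
    ext u; simp [Matrix.toLin'_apply]
  rw [h3, h1, h2]

lemma lintegral_comp_mulVecM (hb : b.det ≠ 0) (h : (Fin d → ℝ) → ENNReal) (hh : Measurable h) :
    ∫⁻ u, h ((b⁻¹)ᵀ.mulVec u) = ENNReal.ofReal |b.det| * ∫⁻ y, h y := by
  rw [← lintegral_map hh measurable_mulVecM, map_mulVecM hb, lintegral_smul_measure, smul_eq_mul]

lemma integrable_comp_mulVecM (hb : b.det ≠ 0) {g : (Fin d → ℝ) → ℝ} (hg : Integrable g) :
    Integrable fun u => g ((b⁻¹)ᵀ.mulVec u) := by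
  have hsm : Integrable g (Measure.map (fun u : Fin d → ℝ => (b⁻¹)ᵀ.mulVec u) volume) := by
    rw [map_mulVecM hb]
    exact hg.smul_measure ENNReal.ofReal_ne_top
  exact (integrable_map_measure hsm.1 measurable_mulVecM.aemeasurable).1 hsm

lemma integral_comp_mulVecM (hb : b.det ≠ 0) {g : (Fin d → ℝ) → ℝ} (hg : Integrable g) :
    ∫ u, g ((b⁻¹)ᵀ.mulVec u) = |b.det| * ∫ y, g y := by
  have hsm : AEStronglyMeasurable g
      (Measure.map (fun u : Fin d → ℝ => (b⁻¹)ᵀ.mulVec u) volume) := by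
    rw [map_mulVecM hb]
    exact (hg.smul_measure (c := ENNReal.ofReal |b.det|) ENNReal.ofReal_ne_top).1
  rw [← integral_map measurable_mulVecM.aemeasurable hsm, map_mulVecM hb,
    integral_smul_measure, ENNReal.toReal_ofReal (abs_nonneg _), smul_eq_mul]

lemma key_lintegral (hb : b.det ≠ 0) (h : (Fin d → ℝ) → ENNReal) (hh : Measurable h) :
    ∫⁻ x in Sm 0, ∑' m : Fin d → ℤ, h ((b⁻¹)ᵀ.mulVec (cVec m + x))
      = ENNReal.ofReal |b.det| * ∫⁻ y, h y := by
  rw [lintegral_cube_tsum (fun u => h ((b⁻¹)ᵀ.mulVec u)) (hh.comp measurable_mulVecM),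
    lintegral_comp_mulVecM hb h hh]

lemma key_integral (hb : b.det ≠ 0) {g : (Fin d → ℝ) → ℝ} (hg : Integrable g)
    (hgm : Measurable g) :
    ∫ x in Sm 0, ∑' m : Fin d → ℤ, g ((b⁻¹)ᵀ.mulVec (cVec m + x)) = |b.det| * ∫ y, g y := by
  have hmeas : ∀ m : Fin d → ℤ, AEStronglyMeasurable
      (fun x => g ((b⁻¹)ᵀ.mulVec (cVec m + x))) (volume.restrict (Sm 0)) :=
    fun m => ((hgm.comp measurable_mulVecM).comp (measurable_const_add (cVec m))).aestronglyMeasurable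
  have hfin : ∑' m : Fin d → ℤ,
      ∫⁻ x in Sm 0, ‖g ((b⁻¹)ᵀ.mulVec (cVec m + x))‖₊ ≠ ⊤ := by
    have hae : ∀ m : Fin d → ℤ, AEMeasurable
        (fun x => (‖g ((b⁻¹)ᵀ.mulVec (cVec m + x))‖₊ : ENNReal)) (volume.restrict (Sm 0)) :=
      fun m => (((hgm.comp measurable_mulVecM).comp
        (measurable_const_add (cVec m))).nnnorm.coe_nnreal_ennreal).aemeasurable
    rw [← lintegral_tsum hae]
    rw [key_lintegral hb (fun y => (‖g y‖₊ : ENNReal)) hgm.nnnorm.coe_nnreal_ennreal]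
    exact ENNReal.mul_ne_top ENNReal.ofReal_ne_top hg.2.ne
  rw [integral_tsum hmeas hfin]
  have h1 : ∀ m : Fin d → ℤ, ∫ x in Sm 0, g ((b⁻¹)ᵀ.mulVec (cVec m + x))
      = ∫ u in Sm m, g ((b⁻¹)ᵀ.mulVec u) :=
    fun m => integral_translate (fun u => g ((b⁻¹)ᵀ.mulVec u)) m
  simp_rw [h1]
  rw [← integral_iUnion Sm_meas Sm_disjoint, Sm_iUnion, Measure.restrict_univ,
    integral_comp_mulVecM hb hg]
  rw [Sm_iUnion, integrableOn_univ]
  exact integrable_comp_mulVecM hb hg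

end Matrix

lemma volume_Sm (m : Fin d → ℤ) : volume (Sm m) = 1 := by
  rw [Sm, volume_pi_pi]
  simp [Real.volume_Ico]

lemma volume_cube : volume (Set.univ.pi fun _ : Fin d => Set.Icc (0:ℝ) 1) = 1 := by
  rw [volume_pi_pi]
  simp [Real.volume_Icc]

lemma cube_restrict_eq :
    volume.restrict (Set.univ.pi fun _ : Fin d => Set.Icc (0:ℝ) 1)
      = volume.restrict (Sm 0) := by
  apply Measure.restrict_congr_set
  rw [Filter.eventuallyEq_set]
  have hsub : Sm (0 : Fin d → ℤ) ⊆ Set.univ.pi fun _ : Fin d => Set.Icc (0:ℝ) 1 := by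
    intro x hx i _
    have := hx i (Set.mem_univ i)
    simp only [Pi.zero_apply, Int.cast_zero, Set.mem_Ico, zero_add] at this
    exact ⟨this.1, this.2.le⟩
  have hdiff : volume ((Set.univ.pi fun _ : Fin d => Set.Icc (0:ℝ) 1) \ Sm 0) = 0 := by
    rw [measure_diff hsub (Sm_meas 0).nullMeasurableSet (by rw [volume_Sm]; exact ENNReal.one_ne_top),
      volume_cube, volume_Sm, tsub_self]
  have hae : ∀ᵐ x ∂(volume : Measure (Fin d → ℝ)),
      x ∉ ((Set.univ.pi fun _ : Fin d => Set.Icc (0:ℝ) 1) \ Sm 0) :=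
    ae_iff.2 (by simpa only [not_not, Set.setOf_mem_eq] using hdiff)
  filter_upwards [hae] with x hx
  constructor
  · intro h
    by_contra hns
    exact hx ⟨h, hns⟩
  · intro h
    exact hsub h

lemma measurable_det' : Measurable fun b : Matrix (Fin d) (Fin d) ℝ => b.det := by
  simp_rw [Matrix.det_apply]
  apply Finset.measurable_sum
  intro σ _
  apply Measurable.const_smul
  apply Finset.measurable_prod
  intro i _
  exact (measurable_pi_apply i).comp (measurable_pi_apply (σ i))

lemma measurable_inv' : Measurable fun b : Matrix (Fin d) (Fin d) ℝ => b⁻¹ := by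
  apply measurable_pi_lambda
  intro i
  apply measurable_pi_lambda
  intro j
  have : (fun b : Matrix (Fin d) (Fin d) ℝ => b⁻¹ i j)
      = fun b => (b.det)⁻¹ * b.adjugate i j := by
    ext b
    rw [Matrix.inv_def, Matrix.smul_apply, Ring.inverse_eq_inv, smul_eq_mul]
  rw [this]
  apply Measurable.mul
  · exact measurable_inv.comp measurable_det'
  · simp_rw [Matrix.adjugate_apply]
    exact measurable_det'.comp (by
      apply measurable_pi_lambda
      intro k
      apply measurable_pi_lambda
      intro l
      by_cases hk : k = j
      · subst hk
        simp only [Matrix.updateRow_self]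
        exact measurable_const
      · simp only [Matrix.updateRow_ne hk]
        exact (measurable_pi_apply l).comp (measurable_pi_apply k))

lemma measurable_phi (m : Fin d → ℤ) :
    Measurable fun p : Matrix (Fin d) (Fin d) ℝ × (Fin d → ℝ) =>
      (p.1⁻¹)ᵀ.mulVec (cVec m + p.2) := by
  apply measurable_pi_lambda
  intro j
  have : (fun p : Matrix (Fin d) (Fin d) ℝ × (Fin d → ℝ) =>
      (p.1⁻¹)ᵀ.mulVec (cVec m + p.2) j)
      = fun p => ∑ k, p.1⁻¹ k j * (cVec m k + p.2 k) := by
    ext p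
    simp [Matrix.mulVec, dotProduct, Matrix.transpose_apply, mul_add, Finset.sum_add_distrib]
  rw [this]
  apply Finset.measurable_sum
  intro k _
  apply Measurable.mul
  · exact ((measurable_pi_apply j).comp ((measurable_pi_apply k).comp measurable_inv')).comp
      measurable_fst
  · exact (measurable_const.add ((measurable_pi_apply k).comp measurable_snd))

lemma ofReal_max_zero (x : ℝ) : ENNReal.ofReal (max x 0) = ENNReal.ofReal x := by
  rcases le_total x 0 with h | h
  · rw [max_eq_right h, ENNReal.ofReal_zero, ENNReal.ofReal_of_nonpos h]
  · rw [max_eq_left h]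

lemma tsum_posneg {ι : Type*} [Countable ι] (a : ι → ℝ) (h : Summable fun i => |a i|) :
    ∑' i, a i = (∑' i, ENNReal.ofReal (a i)).toReal
      - (∑' i, ENNReal.ofReal (-a i)).toReal := by
  have hp : Summable fun i => max (a i) 0 :=
    h.of_nonneg_of_le (fun i => le_max_right _ _)
      (fun i => max_le (le_abs_self _) (abs_nonneg _))
  have hn : Summable fun i => max (-a i) 0 :=
    h.of_nonneg_of_le (fun i => le_max_right _ _)
      (fun i => max_le (neg_le_abs _) (abs_nonneg _))
  have e1 : (∑' i, ENNReal.ofReal (a i)).toReal = ∑' i, max (a i) 0 := by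
    have : ∀ i, ENNReal.ofReal (a i) = ENNReal.ofReal (max (a i) 0) :=
      fun i => (ofReal_max_zero (a i)).symm
    simp_rw [this]
    rw [← ENNReal.ofReal_tsum_of_nonneg (fun i => le_max_right _ _) hp,
      ENNReal.toReal_ofReal (tsum_nonneg fun i => le_max_right _ _)]
  have e2 : (∑' i, ENNReal.ofReal (-a i)).toReal = ∑' i, max (-a i) 0 := by
    have : ∀ i, ENNReal.ofReal (-a i) = ENNReal.ofReal (max (-a i) 0) :=
      fun i => (ofReal_max_zero (-a i)).symm
    simp_rw [this]
    rw [← ENNReal.ofReal_tsum_of_nonneg (fun i => le_max_right _ _) hn,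
      ENNReal.toReal_ofReal (tsum_nonneg fun i => le_max_right _ _)]
  rw [e1, e2, ← hp.tsum_sub hn]
  congr 1
  ext i
  exact (max_zero_sub_eq_self (a i)).symm

lemma prod_null_of_sections {α β : Type*} [MeasurableSpace α] [MeasurableSpace β]
    (μ : Measure α) (ν : Measure β) [SFinite ν] {s : Set (α × β)} (hs : MeasurableSet s)
    (h : ∀ᵐ x ∂μ, ν (Prod.mk x ⁻¹' s) = 0) : μ.prod ν s = 0 := by
  rw [Measure.prod_apply hs, lintegral_congr_ae h, lintegral_zero]
/-- For a random matrix `B` that is almost surely invertible and an independent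
shift `v` uniformly distributed on `[0,1]^d`, and any `f ∈ L¹(ℝ^d)`, the series
`Q_B^v(f) = |det B|⁻¹ ∑_{m ∈ ℤ^d} f(B^{-⊤}(m+v))` converges absolutely almost
surely, and its expectation is `∫ f`. -/

theorem stmt_14 {Ω : Type*} [MeasurableSpace Ω] (P : Measure Ω) [IsProbabilityMeasure P]
    (d : ℕ) (hd : 1 ≤ d)
    (B : Ω → Matrix (Fin d) (Fin d) ℝ) (v : Ω → (Fin d → ℝ))
    (hBmeas : Measurable B) (hvmeas : Measurable v)
    (hBinv : ∀ᵐ ω ∂P, IsUnit (B ω))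
    (hvlaw : Measure.map v P = volume.restrict (Set.univ.pi fun _ : Fin d => Set.Icc (0:ℝ) 1))
    (hindep : IndepFun B v P)
    (f : (Fin d → ℝ) → ℝ) (hf : Integrable f) :
    (∀ᵐ ω ∂P, Summable fun m : Fin d → ℤ =>
        |f (((B ω)⁻¹)ᵀ.mulVec ((fun i => (m i : ℝ)) + v ω))|) ∧
    (∫ ω, |(B ω).det|⁻¹ *
        ∑' m : Fin d → ℤ, f (((B ω)⁻¹)ᵀ.mulVec ((fun i => (m i : ℝ)) + v ω)) ∂P)
      = ∫ y, f y := by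
  classical
  -- measurable version of f
  have hfm := hf.1
  set g : (Fin d → ℝ) → ℝ := hfm.mk f with hgdef
  have hgm : Measurable g := hfm.stronglyMeasurable_mk.measurable
  have hfg : f =ᵐ[volume] g := hfm.ae_eq_mk
  have hg : Integrable g := hf.congr hfg
  -- measures
  set μB : Measure (Matrix (Fin d) (Fin d) ℝ) := Measure.map B P with hμBdef
  set ν : Measure (Fin d → ℝ) := volume.restrict (Sm (0 : Fin d → ℤ)) with hνdef
  have hν : Measure.map v P = ν := by rw [hvlaw, cube_restrict_eq]
  haveI : IsFiniteMeasure ν :=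
    ⟨by rw [hνdef, Measure.restrict_apply_univ, volume_Sm]; exact ENNReal.one_lt_top⟩
  haveI : IsProbabilityMeasure μB := Measure.isProbabilityMeasure_map hBmeas.aemeasurable
  set T : Ω → Matrix (Fin d) (Fin d) ℝ × (Fin d → ℝ) := fun ω => (B ω, v ω) with hTdef
  have hT : Measurable T := hBmeas.prodMk hvmeas
  have hmap : Measure.map T P = μB.prod ν := by
    rw [← hν, hμBdef]
    exact (indepFun_iff_map_prod_eq_prod_map_map hBmeas.aemeasurable hvmeas.aemeasurable).1 hindep
  -- a.e. b has nonzero determinant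
  have hDmeas : MeasurableSet {b : Matrix (Fin d) (Fin d) ℝ | b.det = 0} :=
    measurable_det' (measurableSet_singleton 0)
  have hdet : ∀ᵐ b ∂μB, b.det ≠ 0 := by
    rw [ae_iff]
    have hset : {b : Matrix (Fin d) (Fin d) ℝ | ¬ b.det ≠ 0}
        = {b : Matrix (Fin d) (Fin d) ℝ | b.det = 0} := by ext b; simp
    rw [hset, hμBdef, Measure.map_apply hBmeas hDmeas]
    have hae : ∀ᵐ ω ∂P, (B ω).det ≠ 0 := by
      filter_upwards [hBinv] with ω hω
      exact ((Matrix.isUnit_iff_isUnit_det _).1 hω).ne_zero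
    have h0 := ae_iff.1 hae
    simpa only [not_not, Set.preimage_setOf_eq] using h0
  -- the null set where f and g differ
  obtain ⟨N, hNsub, hNmeas, hNnull⟩ := exists_measurable_superset_of_null (ae_iff.1 hfg)
  have hφm : ∀ m : Fin d → ℤ, Measurable fun p : Matrix (Fin d) (Fin d) ℝ × (Fin d → ℝ) =>
      (p.1⁻¹)ᵀ.mulVec (cVec m + p.2) := measurable_phi
  have hψmap : ∀ (b : Matrix (Fin d) (Fin d) ℝ), b.det ≠ 0 → ∀ m : Fin d → ℤ,
      Measure.map (fun x : Fin d → ℝ => (b⁻¹)ᵀ.mulVec (cVec m + x)) volume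
        = ENNReal.ofReal |b.det| • volume := by
    intro b hb m
    have hco : (fun x : Fin d → ℝ => (b⁻¹)ᵀ.mulVec (cVec m + x))
        = (fun u => (b⁻¹)ᵀ.mulVec u) ∘ (fun x => cVec m + x) := rfl
    rw [hco, ← Measure.map_map measurable_mulVecM (measurable_const_add _),
      map_add_left_eq_self volume (cVec m), map_mulVecM hb]
  have hpre_null : ∀ m : Fin d → ℤ,
      (μB.prod ν) ((fun p : Matrix (Fin d) (Fin d) ℝ × (Fin d → ℝ) =>
        (p.1⁻¹)ᵀ.mulVec (cVec m + p.2)) ⁻¹' N) = 0 := by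
    intro m
    apply prod_null_of_sections _ _ ((hφm m) hNmeas)
    filter_upwards [hdet] with b hb
    have hψ : Measurable fun x : Fin d → ℝ => (b⁻¹)ᵀ.mulVec (cVec m + x) :=
      measurable_mulVecM.comp (measurable_const_add _)
    have hvol : volume ((fun x : Fin d → ℝ => (b⁻¹)ᵀ.mulVec (cVec m + x)) ⁻¹' N) = 0 := by
      have h1 : volume ((fun x : Fin d → ℝ => (b⁻¹)ᵀ.mulVec (cVec m + x)) ⁻¹' N)
          = Measure.map (fun x : Fin d → ℝ => (b⁻¹)ᵀ.mulVec (cVec m + x)) volume N :=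
        (Measure.map_apply hψ hNmeas).symm
      rw [h1, hψmap b hb m, Measure.smul_apply, hNnull, smul_eq_mul, mul_zero]
    exact nonpos_iff_eq_zero.1 (le_trans (Measure.restrict_apply_le _ _) hvol.le)
  have hae_fg : ∀ᵐ p ∂(μB.prod ν), ∀ m : Fin d → ℤ,
      f ((p.1⁻¹)ᵀ.mulVec (cVec m + p.2)) = g ((p.1⁻¹)ᵀ.mulVec (cVec m + p.2)) := by
    have hU : (μB.prod ν) (⋃ m : Fin d → ℤ,
        (fun p : Matrix (Fin d) (Fin d) ℝ × (Fin d → ℝ) =>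
          (p.1⁻¹)ᵀ.mulVec (cVec m + p.2)) ⁻¹' N) = 0 := measure_iUnion_null hpre_null
    have hnm : ∀ᵐ p ∂(μB.prod ν), p ∉ ⋃ m : Fin d → ℤ,
        (fun p : Matrix (Fin d) (Fin d) ℝ × (Fin d → ℝ) =>
          (p.1⁻¹)ᵀ.mulVec (cVec m + p.2)) ⁻¹' N :=
      ae_iff.2 (by simpa only [not_not, Set.setOf_mem_eq] using hU)
    filter_upwards [hnm] with p hp m
    by_contra hne
    exact hp (Set.mem_iUnion.2 ⟨m, hNsub hne⟩)
  -- a.e. finiteness of the absolute series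
  set Fabs : Matrix (Fin d) (Fin d) ℝ × (Fin d → ℝ) → ENNReal :=
    fun p => ∑' m : Fin d → ℤ, ENNReal.ofReal |g ((p.1⁻¹)ᵀ.mulVec (cVec m + p.2))| with hFdef
  have hFmeas : Measurable Fabs :=
    Measurable.ennreal_tsum fun m => ((hgm.comp (hφm m)).abs).ennreal_ofReal
  have hC : ∫⁻ y, ENNReal.ofReal |g y| ≠ ⊤ := by
    have h2 : ∫⁻ y, ‖g y‖ₑ ≠ ⊤ := hg.2.ne
    simpa only [Real.enorm_eq_ofReal_abs] using h2
  have hfin_sec : ∀ (b : Matrix (Fin d) (Fin d) ℝ), b.det ≠ 0 →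
      ∫⁻ x, Fabs (b, x) ∂ν ≠ ⊤ := by
    intro b hb
    rw [hνdef]
    rw [key_lintegral hb (fun y => ENNReal.ofReal |g y|) (hgm.abs.ennreal_ofReal)]
    exact ENNReal.mul_ne_top ENNReal.ofReal_ne_top hC
  have hfin_prod : ∀ᵐ p ∂(μB.prod ν), Fabs p ≠ ⊤ := by
    have hbadmeas : MeasurableSet {p : Matrix (Fin d) (Fin d) ℝ × (Fin d → ℝ) | Fabs p = ⊤} :=
      hFmeas (measurableSet_singleton ⊤)
    have hnull : (μB.prod ν) {p | Fabs p = ⊤} = 0 := by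
      apply prod_null_of_sections _ _ hbadmeas
      filter_upwards [hdet] with b hb
      have hlt := ae_lt_top (hFmeas.comp measurable_prodMk_left) (hfin_sec b hb)
      have h0 := ae_iff.1 hlt
      simpa only [lt_top_iff_ne_top, not_not, Set.preimage_setOf_eq, Function.comp] using h0
    exact ae_iff.2 (by simpa only [not_not, Set.setOf_mem_eq] using hnull)
  -- transfer to Ω
  have hae_fgΩ : ∀ᵐ ω ∂P, ∀ m : Fin d → ℤ,
      f (((B ω)⁻¹)ᵀ.mulVec (cVec m + v ω)) = g (((B ω)⁻¹)ᵀ.mulVec (cVec m + v ω)) :=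
    ae_of_ae_map hT.aemeasurable (hmap ▸ hae_fg)
  have hfinΩ : ∀ᵐ ω ∂P, Fabs (T ω) ≠ ⊤ :=
    ae_of_ae_map hT.aemeasurable (hmap ▸ hfin_prod)
  have hsumΩ : ∀ᵐ ω ∂P, Summable fun m : Fin d → ℤ =>
      |g (((B ω)⁻¹)ᵀ.mulVec (cVec m + v ω))| := by
    filter_upwards [hfinΩ] with ω hω
    have := ENNReal.summable_toReal hω
    simpa only [ENNReal.toReal_ofReal (abs_nonneg _)] using this
  constructor
  · -- first claim
    filter_upwards [hsumΩ, hae_fgΩ] with ω h1 h2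
    have : (fun m : Fin d → ℤ => |f (((B ω)⁻¹)ᵀ.mulVec (cVec m + v ω))|)
        = fun m : Fin d → ℤ => |g (((B ω)⁻¹)ᵀ.mulVec (cVec m + v ω))| := by
      ext m; rw [h2 m]
    exact this ▸ h1
  · -- the expectation
    set Sp : Matrix (Fin d) (Fin d) ℝ × (Fin d → ℝ) → ENNReal :=
      fun p => ∑' m : Fin d → ℤ, ENNReal.ofReal (g ((p.1⁻¹)ᵀ.mulVec (cVec m + p.2))) with hSpdef
    set Sn : Matrix (Fin d) (Fin d) ℝ × (Fin d → ℝ) → ENNReal :=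
      fun p => ∑' m : Fin d → ℤ, ENNReal.ofReal (-(g ((p.1⁻¹)ᵀ.mulVec (cVec m + p.2)))) with hSndef
    have hSpmeas : Measurable Sp :=
      Measurable.ennreal_tsum fun m => (hgm.comp (hφm m)).ennreal_ofReal
    have hSnmeas : Measurable Sn :=
      Measurable.ennreal_tsum fun m => ((hgm.comp (hφm m)).neg).ennreal_ofReal
    set H : Matrix (Fin d) (Fin d) ℝ × (Fin d → ℝ) → ℝ :=
      fun p => |p.1.det|⁻¹ * ((Sp p).toReal - (Sn p).toReal) with hHdef
    have hHmeas : Measurable H :=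
      (((measurable_det'.comp measurable_fst).abs).inv).mul
        (hSpmeas.ennreal_toReal.sub hSnmeas.ennreal_toReal)
    -- pointwise: whenever the series is absolutely summable, H equals the natural expression
    have hHeq : ∀ p : Matrix (Fin d) (Fin d) ℝ × (Fin d → ℝ),
        (Summable fun m : Fin d → ℤ => |g ((p.1⁻¹)ᵀ.mulVec (cVec m + p.2))|) →
        |p.1.det|⁻¹ * ∑' m : Fin d → ℤ, g ((p.1⁻¹)ᵀ.mulVec (cVec m + p.2)) = H p := by
      intro p hp
      rw [hHdef]
      congr 1
      exact tsum_posneg _ hp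
    -- step 1 : rewrite the Ω-integral
    have step1 : (∫ ω, |(B ω).det|⁻¹ *
        ∑' m : Fin d → ℤ, f (((B ω)⁻¹)ᵀ.mulVec (cVec m + v ω)) ∂P) = ∫ ω, H (T ω) ∂P := by
      apply integral_congr_ae
      filter_upwards [hae_fgΩ, hsumΩ] with ω h2 h1
      have hgt : (∑' m : Fin d → ℤ, f (((B ω)⁻¹)ᵀ.mulVec (cVec m + v ω)))
          = ∑' m : Fin d → ℤ, g (((B ω)⁻¹)ᵀ.mulVec (cVec m + v ω)) :=
        tsum_congr fun m => by rw [h2 m]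
      rw [hgt]
      exact hHeq (T ω) h1
    -- integrability of H over the product measure
    have hIp : ∫⁻ y, ENNReal.ofReal (g y) ≠ ⊤ := by
      refine ne_top_of_le_ne_top hC (lintegral_mono fun y => ?_)
      exact ENNReal.ofReal_le_ofReal (le_abs_self _)
    have hIn : ∫⁻ y, ENNReal.ofReal (-(g y)) ≠ ⊤ := by
      refine ne_top_of_le_ne_top hC (lintegral_mono fun y => ?_)
      exact ENNReal.ofReal_le_ofReal (neg_le_abs _)
    have hbound : ∀ p, (‖H p‖₊ : ENNReal)
        ≤ ENNReal.ofReal |p.1.det|⁻¹ * (Sp p + Sn p) := by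
      intro p
      rw [← enorm_eq_nnnorm, Real.enorm_eq_ofReal_abs, hHdef]
      have habs : |(|p.1.det|⁻¹ * ((Sp p).toReal - (Sn p).toReal))|
          = |p.1.det|⁻¹ * |((Sp p).toReal - (Sn p).toReal)| := by
        rw [abs_mul, abs_of_nonneg (inv_nonneg.2 (abs_nonneg _))]
      rw [habs, ENNReal.ofReal_mul (inv_nonneg.2 (abs_nonneg _))]
      refine mul_le_mul_of_nonneg_left ?_ (zero_le)
      calc ENNReal.ofReal |((Sp p).toReal - (Sn p).toReal)|
          ≤ ENNReal.ofReal ((Sp p).toReal + (Sn p).toReal) := by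
            apply ENNReal.ofReal_le_ofReal
            calc |((Sp p).toReal - (Sn p).toReal)| ≤ |(Sp p).toReal| + |(Sn p).toReal| :=
                abs_sub _ _
            _ = (Sp p).toReal + (Sn p).toReal := by
                rw [abs_of_nonneg ENNReal.toReal_nonneg, abs_of_nonneg ENNReal.toReal_nonneg]
        _ = ENNReal.ofReal (Sp p).toReal + ENNReal.ofReal (Sn p).toReal :=
            ENNReal.ofReal_add ENNReal.toReal_nonneg ENNReal.toReal_nonneg
        _ ≤ Sp p + Sn p := add_le_add ENNReal.ofReal_toReal_le ENNReal.ofReal_toReal_le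
    have hHint : Integrable H (μB.prod ν) := by
      refine ⟨hHmeas.aestronglyMeasurable, ?_⟩
      show (∫⁻ p, (‖H p‖₊ : ENNReal) ∂(μB.prod ν)) < ⊤
      calc ∫⁻ p, (‖H p‖₊ : ENNReal) ∂(μB.prod ν)
          ≤ ∫⁻ p, ENNReal.ofReal |p.1.det|⁻¹ * (Sp p + Sn p) ∂(μB.prod ν) :=
            lintegral_mono hbound
        _ = ∫⁻ b, ∫⁻ x, ENNReal.ofReal |b.det|⁻¹ * (Sp (b, x) + Sn (b, x)) ∂ν ∂μB := by
            rw [lintegral_prod]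
            exact (((measurable_det'.comp measurable_fst).abs.inv).ennreal_ofReal.mul
              (hSpmeas.add hSnmeas)).aemeasurable
        _ ≤ ∫⁻ _b : Matrix (Fin d) (Fin d) ℝ,
              ((∫⁻ y, ENNReal.ofReal (g y)) + ∫⁻ y, ENNReal.ofReal (-(g y))) ∂μB := by
            apply lintegral_mono_ae
            filter_upwards [hdet] with b hb
            have hm1 : Measurable fun x : Fin d → ℝ => Sp (b, x) :=
              hSpmeas.comp measurable_prodMk_left
            have hm2 : Measurable fun x : Fin d → ℝ => Sn (b, x) :=
              hSnmeas.comp measurable_prodMk_left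
            rw [lintegral_const_mul _ (f := fun x => Sp (b, x) + Sn (b, x)) (hm1.add hm2), lintegral_add_left hm1]
            have hp1 : ∫⁻ x, Sp (b, x) ∂ν = ENNReal.ofReal |b.det| * ∫⁻ y, ENNReal.ofReal (g y) := by
              rw [hνdef]; exact key_lintegral hb _ hgm.ennreal_ofReal
            have hp2 : ∫⁻ x, Sn (b, x) ∂ν
                = ENNReal.ofReal |b.det| * ∫⁻ y, ENNReal.ofReal (-(g y)) := by
              rw [hνdef]; exact key_lintegral hb _ hgm.neg.ennreal_ofReal
            rw [hp1, hp2, ← mul_add, ← mul_assoc, ← ENNReal.ofReal_mul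
              (inv_nonneg.2 (abs_nonneg _)), inv_mul_cancel₀ (abs_ne_zero.2 hb),
              ENNReal.ofReal_one, one_mul]
        _ < ⊤ := by
            rw [lintegral_const, measure_univ, mul_one]
            exact ENNReal.add_lt_top.2 ⟨hIp.lt_top, hIn.lt_top⟩
    -- Fubini and the inner integral
    have step2 : ∫ ω, H (T ω) ∂P = ∫ p, H p ∂(μB.prod ν) := by
      rw [← hmap]
      exact (integral_map hT.aemeasurable hHmeas.aestronglyMeasurable).symm
    have hinner : ∀ᵐ b ∂μB, (∫ x, H (b, x) ∂ν) = ∫ y, g y := by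
      filter_upwards [hdet] with b hb
      have hsum_b : ∀ᵐ x ∂ν, Summable fun m : Fin d → ℤ =>
          |g ((b⁻¹)ᵀ.mulVec (cVec m + x))| := by
        have hlt := ae_lt_top (hFmeas.comp measurable_prodMk_left) (hfin_sec b hb)
        filter_upwards [hlt] with x hx
        have := ENNReal.summable_toReal hx.ne
        simpa only [ENNReal.toReal_ofReal (abs_nonneg _)] using this
      have heq : ∫ x, H (b, x) ∂ν
          = ∫ x, |b.det|⁻¹ * ∑' m : Fin d → ℤ, g ((b⁻¹)ᵀ.mulVec (cVec m + x)) ∂ν := by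
        apply integral_congr_ae
        filter_upwards [hsum_b] with x hx
        exact (hHeq (b, x) hx).symm
      rw [heq, integral_const_mul, hνdef, key_integral hb hg hgm, ← mul_assoc,
        inv_mul_cancel₀ (abs_ne_zero.2 hb), one_mul]
    show (∫ ω, |(B ω).det|⁻¹ *
        ∑' m : Fin d → ℤ, f (((B ω)⁻¹)ᵀ.mulVec (cVec m + v ω)) ∂P) = ∫ y, f y
    rw [step1, step2, integral_prod _ hHint, integral_congr_ae hinner, integral_const,
      probReal_univ, one_smul]
    exact (integral_congr_ae hfg).symm
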